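/- Let L and L̄ be finite multisets of positive reals, not both empty, and let σ₁ ≤ σ₂ ≤ σ₃ ≤ ⋯ be the nondecreasing enumeration of the multiset σ(L;L̄) = (⊎_{ℓ∈L} A(ℓ)) ⊎ (⊎_{ℓ̄∈L̄} Ā(2ℓ̄)), where A(ℓ) = {0} ∪ (2π/ℓ)ℕ⁺ ∪ (2π/ℓ)ℕ⁺ and Ā(ℓ) = {0} ∪ (2π/ℓ)ℕ⁺. Let ℓ* be the largest element of the multiset L ⊎ 2L̄. Then limsup_{j→∞} (σ_{j+1} − σ_j) = 2π/ℓ*. -/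

import Mathlib

open Classical in
/-- Multiplicity function of the multiset `A(ℓ) = {0} ∪ (2π/ℓ)ℕ⁺ ∪ (2π/ℓ)ℕ⁺`. -/
noncomputable def Amult (ℓ : ℝ) : ℝ → ℕ := fun r =>
  (if r = 0 then 1 else 0)
    + (if ∃ m : ℕ, 0 < m ∧ r = 2 * Real.pi * (m : ℝ) / ℓ then 2 else 0)

open Classical in
/-- Multiplicity function of the multiset `Ā(ℓ) = {0} ∪ (2π/ℓ)ℕ⁺`. -/
noncomputable def Abarmult (ℓ : ℝ) : ℝ → ℕ := fun r =>
  (if r = 0 then 1 else 0)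
    + (if ∃ m : ℕ, 0 < m ∧ r = 2 * Real.pi * (m : ℝ) / ℓ then 1 else 0)

/-- Multiplicity function of `σ(L;L̄) = (⊎_{ℓ∈L} A(ℓ)) ⊎ (⊎_{ℓ̄∈L̄} Ā(2ℓ̄))`. -/
noncomputable def sigmaMult (L Lb : Multiset ℝ) : ℝ → ℕ := fun r =>
  (L.map (fun ℓ => Amult ℓ r)).sum + (Lb.map (fun ℓ => Abarmult (2 * ℓ) r)).sum


lemma dirichlet_list : ∀ (T : List ℝ) {δ : ℝ}, 0 < δ →
    ∃ n : ℕ, 0 < n ∧ ∀ θ ∈ T, ∃ m : ℤ, |(n : ℝ) * θ - m| < δ := by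
  intro T
  induction T with
  | nil => exact fun hδ => ⟨1, one_pos, by simp⟩
  | cons θ l ih =>
    intro δ hδ
    set C : ℕ := ⌈δ⁻¹⌉₊ + 1 with hCdef
    have hC : 0 < C := Nat.succ_pos _
    have hCR : (0:ℝ) < C := by exact_mod_cast hC
    have hinvC : δ⁻¹ < (C : ℝ) := by
      calc δ⁻¹ ≤ (⌈δ⁻¹⌉₊ : ℝ) := Nat.le_ceil _
        _ < C := by exact_mod_cast Nat.lt_succ_self _
    have hCinv : 1 / (C : ℝ) < δ := by
      rw [div_lt_iff₀ hCR]
      calc (1:ℝ) = δ * δ⁻¹ := (mul_inv_cancel₀ hδ.ne').symm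
        _ < δ * C := by exact mul_lt_mul_of_pos_left hinvC hδ
    obtain ⟨n₀, hn₀, h₀⟩ := ih (show (0:ℝ) < δ / C by positivity)
    have hmaps : ∀ c : Fin (C + 1), (fun c : Fin (C+1) =>
        ⌊(C : ℝ) * Int.fract (((c : ℕ) * n₀ : ℕ) * θ)⌋) c ∈ Finset.Ico (0:ℤ) (C : ℤ) := by
      intro c
      rw [Finset.mem_Ico]
      constructor
      · exact Int.floor_nonneg.mpr (mul_nonneg hCR.le (Int.fract_nonneg _))
      · refine Int.floor_lt.mpr ?_
        calc (C : ℝ) * Int.fract ((((c:ℕ)*n₀ : ℕ) : ℝ) * θ)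
            < (C : ℝ) * 1 := mul_lt_mul_of_pos_left (Int.fract_lt_one _) hCR
          _ = ((C:ℤ) : ℝ) := by push_cast; ring
    obtain ⟨c₁, -, c₂, -, hne, heq⟩ :=
      Finset.exists_ne_map_eq_of_card_lt_of_maps_to
        (s := (Finset.univ : Finset (Fin (C + 1)))) (t := Finset.Ico (0:ℤ) (C:ℤ))
        (by simp [Int.card_Ico]) (fun c _ => hmaps c)
    wlog hlt : c₁ < c₂ generalizing c₁ c₂
    · exact this c₂ c₁ hne.symm heq.symm ((Ne.lt_or_gt hne).resolve_left hlt)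
    clear hne
    refine ⟨((c₂ : ℕ) - (c₁ : ℕ)) * n₀, Nat.mul_pos (Nat.sub_pos_of_lt hlt) hn₀, ?_⟩
    have hc12 : (c₁ : ℕ) ≤ (c₂ : ℕ) := hlt.le
    have hcC : ((c₂ : ℕ) - (c₁ : ℕ)) ≤ C := by
      have := c₂.isLt; omega
    intro θ' hθ'
    rcases List.mem_cons.mp hθ' with rfl | hmem
    · -- the new angle
      set x : ℝ := (((c₁:ℕ) * n₀ : ℕ) : ℝ) * θ' with hx
      set y : ℝ := (((c₂:ℕ) * n₀ : ℕ) : ℝ) * θ' with hy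
      refine ⟨⌊y⌋ - ⌊x⌋, ?_⟩
      have hkey : ((((c₂:ℕ) - (c₁:ℕ)) * n₀ : ℕ) : ℝ) * θ' - ((⌊y⌋ - ⌊x⌋ : ℤ) : ℝ)
          = Int.fract y - Int.fract x := by
        rw [Int.fract, Int.fract]
        rw [hx, hy]
        push_cast [Nat.cast_sub hc12]
        ring
      rw [hkey]
      have h1 : |(C:ℝ) * Int.fract x - (C:ℝ) * Int.fract y| < 1 :=
        Int.abs_sub_lt_one_of_floor_eq_floor heq
      rw [← mul_sub, abs_mul, abs_of_pos hCR] at h1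
      have : |Int.fract x - Int.fract y| < 1 / C := by
        rw [lt_div_iff₀ hCR]; linarith
      calc |Int.fract y - Int.fract x| = |Int.fract x - Int.fract y| := abs_sub_comm _ _
        _ < 1 / C := this
        _ < δ := hCinv
    · obtain ⟨m', hm'⟩ := h₀ θ' hmem
      refine ⟨((c₂:ℕ) - (c₁:ℕ) : ℕ) * m', ?_⟩
      have hkey : ((((c₂:ℕ) - (c₁:ℕ)) * n₀ : ℕ) : ℝ) * θ' - ((((c₂:ℕ) - (c₁:ℕ) : ℕ) : ℤ) * m' : ℤ)
          = (((c₂:ℕ) - (c₁:ℕ) : ℕ) : ℝ) * ((n₀ : ℝ) * θ' - m') := by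
        push_cast
        ring
      rw [hkey, abs_mul, Nat.abs_cast]
      calc (((c₂:ℕ) - (c₁:ℕ) : ℕ) : ℝ) * |(n₀:ℝ) * θ' - m'|
          ≤ (C : ℝ) * |(n₀:ℝ) * θ' - m'| := by
            apply mul_le_mul_of_nonneg_right _ (abs_nonneg _)
            exact_mod_cast hcC
        _ < (C : ℝ) * (δ / C) := by
            apply mul_lt_mul_of_pos_left hm' hCR
        _ = δ := by field_simp


lemma dirichlet_large (T : List ℝ) {δ : ℝ} (hδ : 0 < δ) (B : ℕ)
    (hdir : ∃ n : ℕ, 0 < n ∧ ∀ θ ∈ T, ∃ m : ℤ, |(n : ℝ) * θ - m| < δ / (B + 1)) :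
    ∃ n : ℕ, B < n ∧ ∀ θ ∈ T, ∃ m : ℤ, |(n : ℝ) * θ - m| < δ := by
  obtain ⟨n, hn, h⟩ := hdir
  refine ⟨(B + 1) * n, ?_, ?_⟩
  · calc B < B + 1 := Nat.lt_succ_self _
      _ = (B + 1) * 1 := (mul_one _).symm
      _ ≤ (B + 1) * n := Nat.mul_le_mul_left _ hn
  · intro θ hθ
    obtain ⟨m, hm⟩ := h θ hθ
    refine ⟨((B + 1 : ℕ) : ℤ) * m, ?_⟩
    have hkey : (((B + 1) * n : ℕ) : ℝ) * θ - (((B + 1 : ℕ) : ℤ) * m : ℤ)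
        = ((B + 1 : ℕ) : ℝ) * ((n : ℝ) * θ - m) := by push_cast; ring
    have hB1 : (0:ℝ) < ((B+1 : ℕ) : ℝ) := by positivity
    rw [hkey, abs_mul, abs_of_pos hB1]
    have hm' : |(n:ℝ) * θ - m| < δ / ((B+1:ℕ):ℝ) := by
      convert hm using 2
      push_cast; ring
    calc ((B+1:ℕ):ℝ) * |(n:ℝ) * θ - m| < ((B+1:ℕ):ℝ) * (δ / ((B+1:ℕ):ℝ)) :=
          mul_lt_mul_of_pos_left hm' hB1
      _ = δ := by field_simp

set_option maxHeartbeats 1600000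

/-- For the nondecreasing enumeration `σ` of the canonical spectrum `σ(L;L̄)`,
the limsup of consecutive gaps equals `2π/ℓ*` where `ℓ*` is the largest
element of `L ⊎ 2L̄`. -/
theorem gap_limsup (L Lb : Multiset ℝ)
    (hL : ∀ ℓ ∈ L, 0 < ℓ) (hLb : ∀ ℓ ∈ Lb, 0 < ℓ)
    (hne : L + Lb ≠ 0)
    (ℓstar : ℝ)
    (hmem : ℓstar ∈ L + Lb.map (fun ℓ => 2 * ℓ))
    (hmax : ∀ x ∈ L + Lb.map (fun ℓ => 2 * ℓ), x ≤ ℓstar)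
    (σ : ℕ → ℝ) (hmono : Monotone σ)
    (henum : ∀ r : ℝ, Nat.card {j : ℕ | σ j = r} = sigmaMult L Lb r) :
    Filter.limsup (fun j => σ (j + 1) - σ j) Filter.atTop = 2 * Real.pi / ℓstar := by
  classical
  have hπ : (0:ℝ) < Real.pi := Real.pi_pos
  set M : Multiset ℝ := L + Lb.map (fun ℓ => 2 * ℓ) with hMdef
  have hMpos : ∀ x ∈ M, 0 < x := by
    intro x hx
    rcases Multiset.mem_add.mp hx with h | h
    · exact hL x h
    · obtain ⟨b, hb, rfl⟩ := Multiset.mem_map.mp h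
      have := hLb b hb; linarith
  have hℓpos : 0 < ℓstar := hMpos _ hmem
  set d : ℝ := 2 * Real.pi / ℓstar with hddef
  have hd : 0 < d := by positivity
  -- multiplicity positive at multiples of d
  have hmultpos : ∀ m : ℕ, 0 < m → 0 < sigmaMult L Lb (2 * Real.pi * m / ℓstar) := by
    intro m hm
    rcases Multiset.mem_add.mp hmem with h | h
    · have h2 : 2 ≤ Amult ℓstar (2 * Real.pi * m / ℓstar) := by
        have hcond : ∃ m1 : ℕ, 0 < m1 ∧
            2 * Real.pi * (m:ℝ) / ℓstar = 2 * Real.pi * (m1:ℝ) / ℓstar := ⟨m, hm, rfl⟩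
        unfold Amult
        rw [if_pos hcond]
        exact Nat.le_add_left 2 _
      have hle : Amult ℓstar (2 * Real.pi * m / ℓstar)
          ≤ (L.map (fun ℓ => Amult ℓ (2 * Real.pi * m / ℓstar))).sum :=
        Multiset.single_le_sum (fun x _ => Nat.zero_le x) _ (Multiset.mem_map_of_mem _ h)
      unfold sigmaMult; omega
    · obtain ⟨b, hb, hbe⟩ := Multiset.mem_map.mp h
      have h2 : 1 ≤ Abarmult (2 * b) (2 * Real.pi * m / ℓstar) := by
        have hcond : ∃ m1 : ℕ, 0 < m1 ∧
            2 * Real.pi * (m:ℝ) / ℓstar = 2 * Real.pi * (m1:ℝ) / (2 * b) := ⟨m, hm, by rw [hbe]⟩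
        unfold Abarmult
        rw [if_pos hcond]
        exact Nat.le_add_left 1 _
      have hle : Abarmult (2 * b) (2 * Real.pi * m / ℓstar)
          ≤ (Lb.map (fun ℓ => Abarmult (2 * ℓ) (2 * Real.pi * m / ℓstar))).sum :=
        Multiset.single_le_sum (fun x _ => Nat.zero_le x) _ (Multiset.mem_map_of_mem _ hb)
      unfold sigmaMult; omega
  -- every positive multiple of d is attained
  have hex : ∀ m : ℕ, 0 < m → ∃ j, σ j = 2 * Real.pi * m / ℓstar := by
    intro m hm
    have h := henum (2 * Real.pi * m / ℓstar)
    have hpos : 0 < Nat.card {j : ℕ | σ j = 2 * Real.pi * m / ℓstar} :=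
      h ▸ hmultpos m hm
    obtain ⟨⟨j, hj⟩⟩ := (Nat.card_pos_iff.mp hpos).1
    exact ⟨j, hj⟩
  have h2πpos : (0:ℝ) < 2 * Real.pi := by positivity
  -- σ tends to infinity
  have htop : Filter.Tendsto σ Filter.atTop Filter.atTop := by
    apply Filter.tendsto_atTop_atTop_of_monotone hmono
    intro b
    obtain ⟨j, hj⟩ := hex (⌈b * ℓstar / (2 * Real.pi)⌉₊ + 1) (Nat.succ_pos _)
    refine ⟨j, ?_⟩
    rw [hj, le_div_iff₀ hℓpos]
    have h1 : b * ℓstar ≤ 2 * Real.pi * ⌈b * ℓstar / (2 * Real.pi)⌉₊ := by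
      have := Nat.le_ceil (b * ℓstar / (2 * Real.pi))
      rw [div_le_iff₀ h2πpos] at this
      linarith
    push_cast
    nlinarith
  -- every value of σ has positive multiplicity
  have hval : ∀ j, 0 < sigmaMult L Lb (σ j) := by
    intro j
    rw [← henum]
    have hfin : {i : ℕ | σ i = σ j}.Finite := by
      obtain ⟨N, hN⟩ := Filter.eventually_atTop.mp (htop.eventually_gt_atTop (σ j))
      apply Set.Finite.subset (Set.finite_Iio N)
      intro i hi
      simp only [Set.mem_setOf_eq] at hi
      by_contra h
      simp only [Set.mem_Iio, not_lt] at h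
      exact absurd hi (hN i h).ne'
    exact Nat.card_pos_iff.mpr ⟨⟨⟨j, rfl⟩⟩, hfin.to_subtype⟩
  -- structure of positive-multiplicity values
  have hstruct : ∀ r : ℝ, 0 < sigmaMult L Lb r → r ≠ 0 →
      ∃ ℓ, ℓ ∈ M ∧ ∃ m : ℕ, 0 < m ∧ r = 2 * Real.pi * m / ℓ := by
    intro r hr hr0
    by_contra hcon
    push_neg at hcon
    have h1 : (L.map (fun ℓ => Amult ℓ r)).sum = 0 := by
      apply Multiset.sum_eq_zero
      intro x hx
      obtain ⟨ℓ, hℓ, rfl⟩ := Multiset.mem_map.mp hx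
      have hno : ¬ ∃ m : ℕ, 0 < m ∧ r = 2 * Real.pi * m / ℓ := by
        rintro ⟨m, hm, hrm⟩
        exact hcon ℓ (Multiset.mem_add.mpr (Or.inl hℓ)) m hm hrm
      simp [Amult, hr0, hno]
    have h2 : (Lb.map (fun ℓ => Abarmult (2 * ℓ) r)).sum = 0 := by
      apply Multiset.sum_eq_zero
      intro x hx
      obtain ⟨b, hb, rfl⟩ := Multiset.mem_map.mp hx
      have hno : ¬ ∃ m : ℕ, 0 < m ∧ r = 2 * Real.pi * m / (2 * b) := by
        rintro ⟨m, hm, hrm⟩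
        exact hcon (2 * b) (Multiset.mem_add.mpr (Or.inr (Multiset.mem_map_of_mem _ hb))) m hm hrm
      simp [Abarmult, hr0, hno]
    unfold sigmaMult at hr
    omega
  -- nonzero values are ≥ d
  have hvlb : ∀ r : ℝ, 0 < sigmaMult L Lb r → r ≠ 0 → d ≤ r := by
    intro r hr hr0
    obtain ⟨ℓ, hℓM, m, hm, rfl⟩ := hstruct r hr hr0
    have hℓ : 0 < ℓ := hMpos ℓ hℓM
    have hle : ℓ ≤ ℓstar := hmax ℓ hℓM
    rw [hddef, div_le_div_iff₀ hℓpos hℓ]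
    have hm1 : (1:ℝ) ≤ m := by exact_mod_cast hm
    have e1 : 2 * Real.pi * ℓ ≤ 2 * Real.pi * ℓstar := by nlinarith
    have e2 : 2 * Real.pi * ℓstar ≤ 2 * Real.pi * m * ℓstar := by nlinarith [mul_nonneg (sub_nonneg.mpr hm1) (mul_pos h2πpos hℓpos).le]
    linarith
  have hvnn : ∀ j, 0 ≤ σ j := by
    intro j
    rcases eq_or_ne (σ j) 0 with h | h
    · exact h.ge
    · linarith [hvlb _ (hval j) h]
  -- gaps are at most d
  have hgap_le : ∀ j, σ (j + 1) - σ j ≤ d := by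
    intro j
    set m : ℕ := ⌊σ j / d⌋₊ + 1 with hmdef
    have hfl : (⌊σ j / d⌋₊ : ℝ) ≤ σ j / d := Nat.floor_le (div_nonneg (hvnn j) hd.le)
    have hcm : σ j / d < (m : ℝ) := by
      rw [hmdef]; push_cast
      linarith [Nat.lt_floor_add_one (σ j / d)]
    have hcm2 : (m : ℝ) ≤ σ j / d + 1 := by
      rw [hmdef]; push_cast; linarith
    have h1 : σ j < (m : ℝ) * d := by
      calc σ j = σ j / d * d := (div_mul_cancel₀ _ hd.ne').symm
        _ < m * d := mul_lt_mul_of_pos_right hcm hd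
    have h2 : (m : ℝ) * d ≤ σ j + d := by
      calc (m : ℝ) * d ≤ (σ j / d + 1) * d := mul_le_mul_of_nonneg_right hcm2 hd.le
        _ = σ j + d := by rw [add_mul, div_mul_cancel₀ _ hd.ne', one_mul]
    have hmd : (m : ℝ) * d = 2 * Real.pi * m / ℓstar := by rw [hddef]; ring
    obtain ⟨j', hj'⟩ := hex m (Nat.succ_pos _)
    have hjj' : j < j' := by
      by_contra h
      push_neg at h
      have h3 := hmono h
      rw [hj', ← hmd] at h3
      linarith
    have h4 : σ (j + 1) ≤ σ j' := hmono hjj'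
    rw [hj', ← hmd] at h4
    linarith
  -- minimum of M
  have hfne : M.toFinset.Nonempty := ⟨ℓstar, Multiset.mem_toFinset.mpr hmem⟩
  set c : ℝ := M.toFinset.min' hfne with hcdef
  have hcM : c ∈ M := Multiset.mem_toFinset.mp (M.toFinset.min'_mem hfne)
  have hcpos : 0 < c := hMpos c hcM
  have hcle : ∀ ℓ ∈ M, c ≤ ℓ := fun ℓ hℓ => Finset.min'_le _ _ (Multiset.mem_toFinset.mpr hℓ)
  have hcstar : c ≤ ℓstar := hmax c hcM
  have hdval : d * ℓstar = 2 * Real.pi := by rw [hddef]; field_simp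
  -- frequently, gaps are ≥ d - ε
  have hfreq : ∀ ε : ℝ, 0 < ε → ε < d → ∀ K : ℕ, ∃ j, K ≤ j ∧ d - ε ≤ σ (j + 1) - σ j := by
    intro ε hε hεd K
    set δ : ℝ := ε * c / (8 * Real.pi) with hδdef
    have hδpos : 0 < δ := by positivity
    have hδ14 : δ < 1 / 4 := by
      rw [hδdef, div_lt_iff₀ (by positivity)]
      nlinarith [mul_pos (sub_pos.mpr hεd) hℓpos, mul_nonneg hε.le (sub_nonneg.mpr hcstar)]
    set B : ℕ := ⌈ℓstar / c⌉₊ + ⌈|σ K| / d⌉₊ + 1 with hBdef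
    obtain ⟨n, hnB, hdir⟩ := dirichlet_large ((M.toList).map (fun ℓ => ℓ / ℓstar)) hδpos B
      (dirichlet_list _ (by positivity))
    have hn1 : 0 < n := by omega
    have hnc : ℓstar / c ≤ (n : ℝ) := by
      have h1 : (⌈ℓstar / c⌉₊ : ℝ) ≤ (n : ℝ) := by exact_mod_cast (by omega : ⌈ℓstar / c⌉₊ ≤ n)
      linarith [Nat.le_ceil (ℓstar / c)]
    have hnK : σ K < (n : ℝ) * d := by
      have h1 : (⌈|σ K| / d⌉₊ : ℝ) < (n : ℝ) := by exact_mod_cast (by omega : ⌈|σ K| / d⌉₊ < n)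
      have h3 : |σ K| / d < (n : ℝ) := lt_of_le_of_lt (Nat.le_ceil _) h1
      rw [div_lt_iff₀ hd] at h3
      calc σ K ≤ |σ K| := le_abs_self _
        _ < n * d := h3
    set x : ℝ := (n : ℝ) * d with hxdef
    have hxpos : 0 < x := by
      have hn1' : (1:ℝ) ≤ n := by exact_mod_cast hn1
      nlinarith
    -- near points of each progression
    have hnear : ∀ ℓ ∈ M, ∃ m : ℤ, 1 ≤ m ∧ |(m : ℝ) * (2 * Real.pi / ℓ) - x| < ε / 4 := by
      intro ℓ hℓ
      have hθmem : ℓ / ℓstar ∈ (M.toList).map (fun ℓ => ℓ / ℓstar) :=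
        List.mem_map_of_mem ((Multiset.mem_toList).mpr hℓ)
      obtain ⟨m, hm⟩ := hdir _ hθmem
      have hℓp : 0 < ℓ := hMpos ℓ hℓ
      have hcl : c ≤ ℓ := hcle ℓ hℓ
      have habs := abs_lt.mp hm
      have hnθ : 1 ≤ (n : ℝ) * (ℓ / ℓstar) := by
        have h1 : ℓstar / c * (c / ℓstar) = 1 := by field_simp
        have h2 : ℓstar / c * (c / ℓstar) ≤ (n : ℝ) * (c / ℓstar) :=
          mul_le_mul_of_nonneg_right hnc (by positivity)
        have h3 : (n : ℝ) * (c / ℓstar) ≤ (n : ℝ) * (ℓ / ℓstar) := by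
          have : c / ℓstar ≤ ℓ / ℓstar := by gcongr
          exact mul_le_mul_of_nonneg_left this (by positivity)
        linarith
      have hm1 : 1 ≤ m := by
        have h0 : (0:ℝ) < (m : ℝ) := by linarith [habs.2]
        exact_mod_cast h0
      refine ⟨m, hm1, ?_⟩
      have hxeq : x = (n : ℝ) * (ℓ / ℓstar) * (2 * Real.pi / ℓ) := by
        rw [hxdef, hddef]; field_simp
      have hrw : (m : ℝ) * (2 * Real.pi / ℓ) - x
          = (2 * Real.pi / ℓ) * ((m : ℝ) - (n : ℝ) * (ℓ / ℓstar)) := by rw [hxeq]; ring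
      rw [hrw, abs_mul, abs_of_pos (by positivity : (0:ℝ) < 2 * Real.pi / ℓ)]
      have habs' : |(m : ℝ) - (n : ℝ) * (ℓ / ℓstar)| < δ := by rw [abs_sub_comm]; exact hm
      have hb1 : 2 * Real.pi / ℓ ≤ 2 * Real.pi / c :=
        div_le_div_of_nonneg_left (by positivity) hcpos hcl
      have hb2 : 2 * Real.pi / c * δ = ε / 4 := by rw [hδdef]; field_simp; ring
      calc 2 * Real.pi / ℓ * |(m : ℝ) - (n : ℝ) * (ℓ / ℓstar)|
          ≤ 2 * Real.pi / c * |(m : ℝ) - (n : ℝ) * (ℓ / ℓstar)| :=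
            mul_le_mul_of_nonneg_right hb1 (abs_nonneg _)
        _ < 2 * Real.pi / c * δ := mul_lt_mul_of_pos_left habs' (by positivity)
        _ = ε / 4 := hb2
    -- forbidden zone
    have hzone : ∀ r : ℝ, 0 < sigmaMult L Lb r → ¬ (x + ε / 2 < r ∧ r < x + d - ε / 2) := by
      rintro r hr ⟨hra, hrb⟩
      have hr0 : r ≠ 0 := by intro h; rw [h] at hra; linarith
      obtain ⟨ℓ, hℓM, m', hm', rfl⟩ := hstruct r hr hr0
      obtain ⟨m, hm1, hmnear⟩ := hnear ℓ hℓM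
      have hℓp : 0 < ℓ := hMpos ℓ hℓM
      have hre : 2 * Real.pi * m' / ℓ = (m' : ℝ) * (2 * Real.pi / ℓ) := by ring
      have habs := abs_lt.mp hmnear
      rcases le_or_gt ((m' : ℕ) : ℤ) m with hle | hlt
      · have h5 : 2 * Real.pi * m' / ℓ ≤ (m : ℝ) * (2 * Real.pi / ℓ) := by
          rw [hre]
          apply mul_le_mul_of_nonneg_right _ (by positivity)
          exact_mod_cast hle
        linarith [habs.2]
      · have h1' : m + 1 ≤ ((m' : ℕ) : ℤ) := hlt
        have h1 : (m : ℝ) + 1 ≤ ((m' : ℕ) : ℝ) := by exact_mod_cast h1'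
        have h2 : ((m : ℝ) + 1) * (2 * Real.pi / ℓ) ≤ 2 * Real.pi * m' / ℓ := by
          rw [hre]
          exact mul_le_mul_of_nonneg_right h1 (by positivity)
        have h3 : d ≤ 2 * Real.pi / ℓ := by
          rw [hddef]
          exact div_le_div_of_nonneg_left (by positivity) hℓp (hmax ℓ hℓM)
        nlinarith [habs.1]
    -- x is a value
    obtain ⟨j₀, hj₀⟩ := hex n hn1
    have hj₀x : σ j₀ = x := by rw [hj₀, hxdef, hddef]; ring
    obtain ⟨N, hN⟩ := Filter.eventually_atTop.mp (htop.eventually_gt_atTop (x + ε / 2))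
    have hj₀N : j₀ < N := by
      by_contra h
      push_neg at h
      have := hN j₀ h
      rw [hj₀x] at this; linarith
    set P : ℕ → Prop := fun i => σ i ≤ x + ε / 2 with hPdef
    have hP0 : P j₀ := by show σ j₀ ≤ x + ε / 2; rw [hj₀x]; linarith
    set j : ℕ := Nat.findGreatest P N with hjdef
    have hj₀j : j₀ ≤ j := Nat.le_findGreatest hj₀N.le hP0
    have hPj : P j := Nat.findGreatest_spec hj₀N.le hP0
    have hjN : j < N := by
      have h1 : j ≤ N := Nat.findGreatest_le N
      rcases lt_or_eq_of_le h1 with h | h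
      · exact h
      · exfalso
        have h2 := hN N le_rfl
        have h3 : σ j ≤ x + ε / 2 := hPj
        rw [h] at h3
        linarith
    have hPj1 : ¬ P (j + 1) := Nat.findGreatest_is_greatest (Nat.lt_succ_self j) (by omega)
    have hσj1 : x + ε / 2 < σ (j + 1) := by
      by_contra h
      push_neg at h
      exact hPj1 h
    have hσj1' : x + d - ε / 2 ≤ σ (j + 1) := by
      rcases lt_or_ge (σ (j + 1)) (x + d - ε / 2) with h | h
      · exact absurd ⟨hσj1, h⟩ (hzone _ (hval (j + 1)))
      · exact h
    have hxj : x ≤ σ j := by rw [← hj₀x]; exact hmono hj₀j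
    have hKj : K ≤ j := by
      by_contra h
      push_neg at h
      have h2 := hmono h.le
      linarith
    refine ⟨j, hKj, ?_⟩
    have h3 : σ j ≤ x + ε / 2 := hPj
    linarith
  -- conclude
  have hbdd : Filter.IsBoundedUnder (· ≤ ·) Filter.atTop (fun j => σ (j + 1) - σ j) :=
    Filter.isBoundedUnder_of ⟨d, fun j => hgap_le j⟩
  have hcob : Filter.IsCoboundedUnder (· ≤ ·) Filter.atTop (fun j => σ (j + 1) - σ j) := by
    apply Filter.IsBoundedUnder.isCoboundedUnder_le
    exact Filter.isBoundedUnder_of ⟨0, fun j => sub_nonneg.mpr (hmono (Nat.le_succ j))⟩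
  have hub : Filter.limsup (fun j => σ (j + 1) - σ j) Filter.atTop ≤ d :=
    Filter.limsup_le_of_le hcob (Filter.Eventually.of_forall hgap_le)
  have key : ∀ ε : ℝ, 0 < ε → ε < d →
      d - ε ≤ Filter.limsup (fun j => σ (j + 1) - σ j) Filter.atTop := by
    intro ε hε hεd
    apply Filter.le_limsup_of_frequently_le _ hbdd
    rw [Filter.frequently_atTop]
    intro K
    obtain ⟨j, hjK, hjg⟩ := hfreq ε hε hεd K
    exact ⟨j, hjK, hjg⟩
  have hlb : d ≤ Filter.limsup (fun j => σ (j + 1) - σ j) Filter.atTop := by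
    set Ls := Filter.limsup (fun j => σ (j + 1) - σ j) Filter.atTop with hLs
    by_contra hcon
    push_neg at hcon
    have hε1 : 0 < min ((d - Ls) / 2) (d / 2) := lt_min (by linarith) (by linarith)
    have hε2 : min ((d - Ls) / 2) (d / 2) < d := lt_of_le_of_lt (min_le_right _ _) (by linarith)
    have h1 := key _ hε1 hε2
    have h2 : min ((d - Ls) / 2) (d / 2) ≤ (d - Ls) / 2 := min_le_left _ _
    linarith
  exact le_antisymm hub hlb
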